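/- Let λ₁, λ₂, μ₁, μ₂, θ_s > 0 and set γ_s = λ₁/(λ₁+λ₂). For m, n ≥ 1 the two expressions (μ₁/(μ₁+μ₂+m·θ_s)) · ∏_{i=1}^{m} λ₂/(μ₂+i·θ_s) · ∏_{i=1}^{n} (λ₁+λ₂)/(μ₁+μ₂+m·θ_s+i·θ_s) and ∏_{i=1}^{m+n} (λ₁+λ₂)/(μ₁+μ₂+i·θ_s) · ∏_{i=1}^{m} ((μ₁ + μ₂·[i>1] + (i-1)·θ_s)·(1-γ_s))/(μ₂+i·θ_s) are equal, where [i>1] equals 1 if i > 1 and 0 otherwise. -/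

import Mathlib

theorem stmt_2 (l1 l2 m1 m2 θ : ℝ) (hl1 : 0 < l1) (hl2 : 0 < l2) (hm1 : 0 < m1)
    (hm2 : 0 < m2) (hθ : 0 < θ) (γ : ℝ) (hγ : γ = l1 / (l1 + l2)) :
    ∀ m n : ℕ, 1 ≤ m → 1 ≤ n →
      (m1 / (m1 + m2 + (m : ℝ) * θ)) *
        (∏ i ∈ Finset.Icc 1 m, l2 / (m2 + (i : ℝ) * θ)) *
        (∏ i ∈ Finset.Icc 1 n, (l1 + l2) / (m1 + m2 + (m : ℝ) * θ + (i : ℝ) * θ)) =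
      (∏ i ∈ Finset.Icc 1 (m + n), (l1 + l2) / (m1 + m2 + (i : ℝ) * θ)) *
        (∏ i ∈ Finset.Icc 1 m,
          ((m1 + (if 1 < i then m2 else 0) + ((i : ℝ) - 1) * θ) * (1 - γ)) /
            (m2 + (i : ℝ) * θ)) := by
  intro m n hm hn
  have hl12 : (0:ℝ) < l1 + l2 := by linarith
  have hγ' : 1 - γ = l2 / (l1 + l2) := by
    rw [hγ]; field_simp; ring
  -- telescoping lemma
  have key : ∀ k : ℕ, 1 ≤ k →
      ∏ i ∈ Finset.Icc 1 k, (m1 + (if 1 < i then m2 else 0) + ((i : ℝ) - 1) * θ) /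
        (m1 + m2 + (i : ℝ) * θ) = m1 / (m1 + m2 + (k : ℝ) * θ) := by
    intro k hk
    induction k, hk using Nat.le_induction with
    | base => norm_num
    | succ k hk ih =>
      rw [Finset.prod_Icc_succ_top (by omega : 1 ≤ k + 1), ih,
        if_pos (by omega : 1 < k + 1)]
      have h1 : (0:ℝ) < m1 + m2 + (k:ℝ) * θ := by positivity
      have h2 : (0:ℝ) < m1 + m2 + ((k:ℝ) + 1) * θ := by positivity
      push_cast
      field_simp
      ring
  -- splitting the (m+n)-product
  have split : ∀ k : ℕ,
      ∏ i ∈ Finset.Icc 1 (m + k), (l1 + l2) / (m1 + m2 + (i : ℝ) * θ) =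
      (∏ i ∈ Finset.Icc 1 m, (l1 + l2) / (m1 + m2 + (i : ℝ) * θ)) *
        ∏ i ∈ Finset.Icc 1 k, (l1 + l2) / (m1 + m2 + (m : ℝ) * θ + (i : ℝ) * θ) := by
    intro k
    induction k with
    | zero => simp
    | succ k ih =>
      rw [show m + (k + 1) = (m + k) + 1 by ring,
        Finset.prod_Icc_succ_top (by omega : 1 ≤ m + k + 1), ih,
        Finset.prod_Icc_succ_top (by omega : 1 ≤ k + 1)]
      push_cast
      ring
  rw [split n]
  -- combine the two m-products on the RHS
  have combine :
      (∏ i ∈ Finset.Icc 1 m, (l1 + l2) / (m1 + m2 + (i : ℝ) * θ)) *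
        ∏ i ∈ Finset.Icc 1 m,
          ((m1 + (if 1 < i then m2 else 0) + ((i : ℝ) - 1) * θ) * (1 - γ)) /
            (m2 + (i : ℝ) * θ) =
      (∏ i ∈ Finset.Icc 1 m, l2 / (m2 + (i : ℝ) * θ)) *
        ∏ i ∈ Finset.Icc 1 m, (m1 + (if 1 < i then m2 else 0) + ((i : ℝ) - 1) * θ) /
          (m1 + m2 + (i : ℝ) * θ) := by
    rw [← Finset.prod_mul_distrib, ← Finset.prod_mul_distrib]
    apply Finset.prod_congr rfl
    intro i _
    have h1 : (0:ℝ) < m1 + m2 + (i:ℝ) * θ := by positivity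
    have h2 : (0:ℝ) < m2 + (i:ℝ) * θ := by positivity
    rw [hγ']
    field_simp
  calc (m1 / (m1 + m2 + (m : ℝ) * θ)) *
        (∏ i ∈ Finset.Icc 1 m, l2 / (m2 + (i : ℝ) * θ)) *
        (∏ i ∈ Finset.Icc 1 n, (l1 + l2) / (m1 + m2 + (m : ℝ) * θ + (i : ℝ) * θ))
      = ((∏ i ∈ Finset.Icc 1 m, l2 / (m2 + (i : ℝ) * θ)) *
          (m1 / (m1 + m2 + (m : ℝ) * θ))) *
        (∏ i ∈ Finset.Icc 1 n, (l1 + l2) / (m1 + m2 + (m : ℝ) * θ + (i : ℝ) * θ)) := by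
        ring
    _ = ((∏ i ∈ Finset.Icc 1 m, l2 / (m2 + (i : ℝ) * θ)) *
          ∏ i ∈ Finset.Icc 1 m, (m1 + (if 1 < i then m2 else 0) + ((i : ℝ) - 1) * θ) /
            (m1 + m2 + (i : ℝ) * θ)) *
        (∏ i ∈ Finset.Icc 1 n, (l1 + l2) / (m1 + m2 + (m : ℝ) * θ + (i : ℝ) * θ)) := by
        rw [key m hm]
    _ = _ := by rw [← combine]; ring
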